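/- arXiv:1401.0936 — 3 statements merged into one kernel-verified Lean document; each statement's English description precedes it below -/
import Mathlib

section
/- Let T be a string of length n−1 over an alphabet and let ℓ_i denote, for each starting position i, the length of the longest common prefix between the suffix T[i..n−1] and any lexicographically smaller suffix of T. Then ℓ_i ≥ ℓ_{i−1} − 1 for all i ≥ 2, i.e., ℓ_{i−1} ≤ ℓ_i + 1. -/
/-- Length of the longest common prefix of two lists. -/
def lcpLen {α : Type*} [DecidableEq α] : List α → List α → ℕ
  | a :: as, b :: bs => if a = b then lcpLen as bs + 1 else 0
  | _, _ => 0

theorem lcpLen_cons {α : Type*} [DecidableEq α] (a b : α) (as bs : List α) :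
    lcpLen (a :: as) (b :: bs) = if a = b then lcpLen as bs + 1 else 0 := rfl

/-- Let `ℓ i` be the length of the longest common prefix between the suffix
`T.drop i` and any lexicographically smaller suffix of `T`.  Then
`ℓ (i-1) ≤ ℓ i + 1` for all `1 ≤ i < |T|`. -/
theorem plcp_decreases_by_at_most_one {α : Type*} [LinearOrder α]
    (T : List α) (ℓ : ℕ → ℕ)
    (hℓ : ∀ i < T.length,
      ℓ i = ((Finset.range T.length).filter
          (fun j => T.drop j < T.drop i)).sup
          (fun j => lcpLen (T.drop i) (T.drop j))) :
    ∀ i, 1 ≤ i → i < T.length → ℓ (i - 1) ≤ ℓ i + 1 := by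
  intro i hi1 hilt
  have hi1lt : i - 1 < T.length := lt_of_le_of_lt (Nat.sub_le _ _) hilt
  rw [hℓ (i - 1) hi1lt, hℓ i hilt]
  apply Finset.sup_le
  intro j hj
  simp only [Finset.mem_filter, Finset.mem_range] at hj
  obtain ⟨hjlt, hjord⟩ := hj
  -- decompose drop (i-1) and drop j
  have hdi : T.drop (i - 1) = T[i - 1] :: T.drop i := by
    have h11 : i - 1 + 1 = i := by omega
    rw [List.drop_eq_getElem_cons hi1lt, h11]
  rcases hdj : T.drop j with _ | ⟨b, bs⟩
  · simp [hdi, lcpLen]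
  · have hbs : bs = T.drop (j + 1) := by
      have := List.drop_eq_getElem_cons hjlt (l := T)
      rw [hdj] at this
      exact ((List.cons.injEq _ _ _ _).mp this).2
    rw [hdi]
    subst hbs
    rw [lcpLen_cons]
    split
    · rename_i hab
      subst hab
      -- now need lcpLen (drop i) bs ≤ ℓ i  where bs = drop (j+1)
      simp only [Nat.add_le_add_iff_right]
      rcases Nat.lt_or_ge (j + 1) T.length with h1 | h1
      · -- drop (j+1) < drop i from lex cons
        have hlt' : T.drop (j + 1) < T.drop i := by
          rw [hdi, hdj] at hjord
          cases hjord with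
          | cons h => exact h
          | rel h => exact absurd h (lt_irrefl _)
        have hmem : j + 1 ∈ (Finset.range T.length).filter
            (fun k => T.drop k < T.drop i) := by
          rw [Finset.mem_filter, Finset.mem_range]
          exact ⟨h1, hlt'⟩
        exact Finset.le_sup (f := fun k => lcpLen (T.drop i) (T.drop k)) hmem
      · rw [List.drop_eq_nil_of_le h1]
        rcases T.drop i with _ | ⟨c, cs⟩ <;> simp [lcpLen]
    · simp
end

section
/- Sampling nodes of a rooted tree that have depth a multiple of b and height at least b−1 yields at most n/b sampled nodes, where n is the total number of nodes and b ≥ 2. -/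
/-- A rooted ordered tree. -/
inductive RTree where
  | node : List RTree → RTree

namespace RTree

/-- Total number of nodes. -/
def size : RTree → ℕ
  | node cs => 1 + (cs.attach.map (fun x => size x.1)).sum
decreasing_by
  have := List.sizeOf_lt_of_mem x.2
  simp at this ⊢
  omega

/-- Height of a node: maximum distance to a leaf in its subtree. -/
def height : RTree → ℕ
  | node cs => (cs.attach.map (fun x => height x.1 + 1)).foldr max 0
decreasing_by
  have := List.sizeOf_lt_of_mem x.2
  simp at this ⊢
  omega

/-- Number of sampled nodes in the subtree of a node at depth `d`: a node is
sampled iff its depth is a multiple of `b` and its height is at least `b - 1`. -/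
def countSampled (b : ℕ) : ℕ → RTree → ℕ
  | d, node cs =>
      (if d % b = 0 ∧ b - 1 ≤ height (node cs) then 1 else 0) +
        (cs.attach.map (fun x => countSampled b (d + 1) x.1)).sum
decreasing_by
  have := List.sizeOf_lt_of_mem x.2
  simp at this ⊢
  omega

end RTree

namespace RTreeAux

open RTree

lemma size_eq (cs : List RTree) : size (node cs) = 1 + (cs.map size).sum := by
  rw [size, List.attach_map_val]

lemma height_eq (cs : List RTree) :
    height (node cs) = (cs.map (fun x => height x + 1)).foldr max 0 := by
  rw [height, List.attach_map_val (l := cs) (f := fun x => height x + 1)]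

lemma count_eq (b d : ℕ) (cs : List RTree) :
    countSampled b d (node cs) =
      (if d % b = 0 ∧ b - 1 ≤ height (node cs) then 1 else 0) +
        (cs.map (countSampled b (d + 1))).sum := by
  rw [countSampled, List.attach_map_val]

lemma le_foldr_max {l : List ℕ} {a : ℕ} (h : a ∈ l) : a ≤ l.foldr max 0 := by
  induction l with
  | nil => simp at h
  | cons x t ih =>
    rcases List.mem_cons.mp h with rfl | h
    · simp
    · simp only [List.foldr_cons]
      exact le_max_of_le_right (ih h)

lemma foldr_max_mem (l : List ℕ) : l.foldr max 0 = 0 ∨ l.foldr max 0 ∈ l := by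
  induction l with
  | nil => left; rfl
  | cons x t ih =>
    simp only [List.foldr_cons]
    rcases Nat.le_total x (t.foldr max 0) with h | h
    · rw [max_eq_right h]
      rcases ih with h0 | hm
      · left; exact h0
      · right; exact List.mem_cons_of_mem _ hm
    · rw [max_eq_left h]
      right; exact List.mem_cons_self

lemma exists_max_child {cs : List RTree} (h : cs ≠ []) :
    ∃ j ∈ cs, height j + 1 = height (node cs) := by
  rw [height_eq]
  rcases foldr_max_mem (cs.map (fun x => height x + 1)) with h0 | hm
  · exfalso
    obtain ⟨c, hc⟩ := List.exists_mem_of_ne_nil cs h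
    have : height c + 1 ≤ (cs.map (fun x => height x + 1)).foldr max 0 :=
      le_foldr_max (List.mem_map_of_mem hc)
    omega
  · obtain ⟨j, hj, hje⟩ := List.mem_map.mp hm
    exact ⟨j, hj, hje⟩

lemma sum_helper {l : List RTree} {f g : RTree → ℕ}
    (h : ∀ x ∈ l, f x ≤ g x) {j : RTree} (hj : j ∈ l) (e : ℕ)
    (hje : f j + e ≤ g j) : (l.map f).sum + e ≤ (l.map g).sum := by
  induction l with
  | nil => simp at hj
  | cons x t ih =>
    simp only [List.map_cons, List.sum_cons]
    rcases List.mem_cons.mp hj with rfl | hj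
    · have : (t.map f).sum ≤ (t.map g).sum :=
        List.sum_le_sum (fun x hx => h x (List.mem_cons_of_mem _ hx))
      omega
    · have h1 := ih (fun x hx => h x (List.mem_cons_of_mem _ hx)) hj
      have h2 := h x List.mem_cons_self
      omega

lemma succ_mod (b d : ℕ) (hb : 2 ≤ b) :
    (d + 1) % b = if d % b = b - 1 then 0 else d % b + 1 := by
  have h1 : (d + 1) % b = (d % b + 1) % b := by
    conv_lhs => rw [Nat.add_mod, Nat.mod_eq_of_lt (by omega : 1 < b)]
  have h2 : d % b < b := Nat.mod_lt _ (by omega)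
  by_cases h : d % b = b - 1
  · rw [if_pos h, h1, h]
    have hb1 : b - 1 + 1 = b := by omega
    rw [hb1, Nat.mod_self]
  · rw [if_neg h, h1, Nat.mod_eq_of_lt (by omega)]

lemma key (b : ℕ) (hb : 2 ≤ b) :
    ∀ (n : ℕ) (t : RTree), sizeOf t ≤ n → ∀ d : ℕ,
      b * countSampled b d t +
        (if d % b = 0 then 0 else min (b - d % b) (height t + 1)) ≤ size t := by
  intro n
  induction n with
  | zero => intro t ht; cases t with | node cs => simp at ht
  | succ n ih =>
    intro t ht d
    cases t with
    | node cs =>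
      have hich : ∀ x ∈ cs, ∀ d : ℕ,
          b * countSampled b d x +
            (if d % b = 0 then 0 else min (b - d % b) (height x + 1)) ≤ size x := by
        intro x hx
        apply ih
        have := List.sizeOf_lt_of_mem hx
        simp at ht ⊢
        omega
      have hpw : ∀ x ∈ cs, b * countSampled b (d + 1) x ≤ size x := by
        intro x hx
        have := hich x hx (d + 1)
        by_cases h : (d + 1) % b = 0
        · rw [if_pos h] at this; omega
        · rw [if_neg h] at this; omega
      have hCsum : b * (cs.map (countSampled b (d + 1))).sum ≤ (cs.map size).sum := by
        have h := List.sum_le_sum hpw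
        rwa [List.sum_map_mul_left] at h
      rw [count_eq, size_eq]
      have hmod : d % b < b := Nat.mod_lt _ (by omega)
      have hsm := succ_mod b d hb
      by_cases hk : d % b = 0
      · rw [if_pos hk]
        by_cases hs : b - 1 ≤ height (node cs)
        · -- sampled root
          rw [if_pos ⟨hk, hs⟩]
          have hne : cs ≠ [] := by
            intro h
            rw [h, height_eq] at hs
            simp at hs
            omega
          obtain ⟨j, hj, hje⟩ := exists_max_child hne
          have hIHj := hich j hj (d + 1)
          have hj1 : (d + 1) % b = 1 := by
            rw [hsm, if_neg (by omega : ¬ d % b = b - 1)]; omega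
          rw [hj1, if_neg (by omega : ¬ (1 : ℕ) = 0)] at hIHj
          have hIHj' : b * countSampled b (d + 1) j + (b - 1) ≤ size j := by
            have : min (b - 1) (height j + 1) = b - 1 := by omega
            omega
          have hsum := sum_helper (f := fun x => b * countSampled b (d + 1) x)
            (g := size) hpw hj (b - 1) hIHj'
          rw [List.sum_map_mul_left] at hsum
          simp only [mul_add, mul_one]
          omega
        · rw [if_neg (fun h => hs h.2)]
          simp only [mul_add, mul_zero, zero_add]
          omega
      · rw [if_neg (fun (h : d % b = 0 ∧ _) => hk h.1), if_neg hk]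
        rcases eq_or_ne cs [] with rfl | hne
        · rw [height_eq]
          simp
        · obtain ⟨j, hj, hje⟩ := exists_max_child hne
          by_cases hk1 : d % b = b - 1
          · have : min (b - d % b) (height (node cs) + 1) ≤ 1 := by omega
            simp only [mul_add, mul_zero, zero_add]
            omega
          · have hIHj := hich j hj (d + 1)
            have hj1 : (d + 1) % b = d % b + 1 := by
              rw [hsm, if_neg hk1]
            rw [hj1, if_neg (by omega : ¬ d % b + 1 = 0)] at hIHj
            have hsum := sum_helper (f := fun x => b * countSampled b (d + 1) x)
              (g := size) hpw hj _ hIHj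
            rw [List.sum_map_mul_left] at hsum
            have hmin : min (b - d % b) (height (node cs) + 1) ≤
                min (b - (d % b + 1)) (height j + 1) + 1 := by omega
            simp only [mul_add, mul_zero, zero_add]
            omega

end RTreeAux

/-- Sampling the nodes of a rooted tree whose depth is a multiple of `b` and
whose height is at least `b - 1` yields at most `n / b` sampled nodes, where
`n` is the total number of nodes and `b ≥ 2`. -/
theorem sampled_nodes_le (b : ℕ) (hb : 2 ≤ b) (t : RTree) :
    RTree.countSampled b 0 t ≤ RTree.size t / b := by
  have h := RTreeAux.key b hb (sizeOf t) t le_rfl 0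
  simp only [Nat.zero_mod, if_pos rfl, add_zero] at h
  rw [Nat.le_div_iff_mul_le (by omega : 0 < b), mul_comm]
  omega
end

section
/- If the suffix of rank r (in lexicographic order among suffixes of T) starts with a factor p of length ℓ, the suffix of rank r−1 is prefixed by the length-(ℓ−1) prefix of p but not by p itself, and p occurs in T at least twice, then the length-(ℓ−1) prefix of p is right-maximal in T (it occurs followed by at least two distinct characters). -/
private lemma two_le_count_of_two_getElem {α : Type*} [DecidableEq α]
    (l : List α) (a : α) (i j : ℕ) (hi : i < l.length) (hj : j < l.length)
    (hij : i < j) (h1 : l[i] = a) (h2 : l[j] = a) : 2 ≤ l.count a := by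
  have hmem1 : a ∈ l.take j := by
    have : (l.take j)[i]'(by simp [List.length_take]; omega) = a := by
      rw [List.getElem_take]; exact h1
    exact this ▸ List.getElem_mem _
  have hmem2 : a ∈ l.drop j := by
    have : (l.drop j)[0]'(by simp; omega) = a := by
      rw [List.getElem_drop]; simpa using h2
    exact this ▸ List.getElem_mem _
  have c1 : 0 < (l.take j).count a := List.count_pos_iff.mpr hmem1
  have c2 : 0 < (l.drop j).count a := List.count_pos_iff.mpr hmem2
  calc 2 ≤ (l.take j).count a + (l.drop j).count a := by omega
    _ = l.count a := by rw [← List.count_append, List.take_append_drop]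

private lemma getElem_eq_getElem_of_eq {α : Type*} {l l' : List α} (h : l = l')
    {i j : ℕ} (hij : i = j) (hi : i < l.length) :
    l[i] = l'[j]'(by subst h hij; exact hi) := by
  subst h; subst hij; rfl

/-- Setting: `T` is a `$`-terminated string (its last character `dollar`
occurs exactly once, at the end); its (nonempty) suffixes are the `T.drop i`
for `i < |T|`, totally ordered lexicographically.  Hypotheses: the suffix
`s₂` (of rank `r`) starts with a factor `p` of length `ℓ ≥ 1`; the suffix
`s₁` (of rank `r − 1`, i.e. the lexicographically adjacent smaller suffix)
is prefixed by the length-`(ℓ−1)` prefix of `p` but not by `p` itself; and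
`p` occurs in `T` at least twice.  Conclusion: the length-`(ℓ−1)` prefix of
`p` is right-maximal: it occurs followed by at least two distinct
characters. -/
theorem right_maximal_of_adjacent_suffixes {α : Type*} [LinearOrder α]
    (T : List α) (dollar : α) (hne : T ≠ []) (hlast : T.getLast hne = dollar)
    (hdollar : T.count dollar = 1)
    (p : List α) (ℓ : ℕ) (hp : p.length = ℓ) (hℓ : 1 ≤ ℓ)
    (i₁ i₂ : ℕ) (h₁ : i₁ < T.length) (h₂ : i₂ < T.length)
    (s₁ s₂ : List α) (hs₁ : s₁ = T.drop i₁) (hs₂ : s₂ = T.drop i₂)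
    (hlt : s₁ < s₂)
    (hadj : ∀ j < T.length, ¬ (s₁ < T.drop j ∧ T.drop j < s₂))
    (hpref₂ : p <+: s₂)
    (hpref₁ : p.take (ℓ - 1) <+: s₁)
    (hnpref₁ : ¬ p <+: s₁)
    (htwice : ∃ j k : ℕ, j < k ∧ k < T.length ∧ p <+: T.drop j ∧ p <+: T.drop k) :
    ∃ a b : α, a ≠ b ∧
      (∃ j < T.length, p.take (ℓ - 1) ++ [a] <+: T.drop j) ∧
      (∃ j < T.length, p.take (ℓ - 1) ++ [b] <+: T.drop j) := by
  have hTpos : 0 < T.length := List.length_pos_iff.mpr hne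
  obtain ⟨q, hq⟩ : ∃ q, q = p.take (ℓ - 1) := ⟨_, rfl⟩
  have hℓp : ℓ - 1 < p.length := by omega
  obtain ⟨c, hc⟩ : ∃ c, c = p[ℓ - 1]'hℓp := ⟨_, rfl⟩
  rw [← hq] at hpref₁ ⊢
  have hql : q.length = ℓ - 1 := by rw [hq]; simp [hp]
  have hpqc : p = q ++ [c] := by
    conv_lhs => rw [← List.take_length (l := p), hp, show ℓ = (ℓ - 1) + 1 by omega,
      List.take_succ]
    rw [List.getElem?_eq_getElem hℓp, hq, hc]
    rfl
  have hlen1 : s₁.length = T.length - i₁ := by rw [hs₁]; simp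
  have hlen2 : s₂.length = T.length - i₂ := by rw [hs₂]; simp
  by_cases hcase : ℓ - 1 < s₁.length
  · -- s₁ is long enough: take its next character
    obtain ⟨d, hd⟩ : ∃ d, d = s₁[ℓ - 1]'hcase := ⟨_, rfl⟩
    have htake : q = s₁.take (ℓ - 1) := by
      have := List.prefix_iff_eq_take.mp hpref₁
      rwa [hql] at this
    have hpref₁' : q ++ [d] <+: s₁ := by
      rw [List.prefix_iff_eq_take]
      rw [show (q ++ [d]).length = (ℓ - 1) + 1 by simp [hql], List.take_succ,
        List.getElem?_eq_getElem hcase, ← htake, hd]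
      rfl
    have hdc : d ≠ c := by
      intro h
      exact hnpref₁ (by rw [hpqc, ← h]; exact hpref₁')
    refine ⟨d, c, hdc, ⟨i₁, h₁, ?_⟩, ⟨i₂, h₂, ?_⟩⟩
    · rw [← hs₁]; exact hpref₁'
    · rw [← hs₂, ← hpqc]; exact hpref₂
  · -- s₁ = q: then q ends with dollar, but p extends q inside s₂, contradiction
    exfalso
    push_neg at hcase
    have hs₁q : q = s₁ := hpref₁.eq_of_length (by have h5 := hpref₁.length_le; omega)
    have hs₁len : s₁.length = ℓ - 1 := by rw [← hs₁q, hql]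
    have hℓ2 : 2 ≤ ℓ := by omega
    have hdollar₁ : T[T.length - 1]'(by omega) = dollar := by
      rw [← List.getLast_eq_getElem hne]; exact hlast
    have hs₁last : s₁[ℓ - 2]'(by omega) = dollar := by
      calc s₁[ℓ - 2]'(by omega) = (T.drop i₁)[ℓ - 2]'(by simp; omega) :=
            getElem_eq_getElem_of_eq hs₁ rfl _
        _ = T[i₁ + (ℓ - 2)]'(by omega) := List.getElem_drop
        _ = T[T.length - 1]'(by omega) := getElem_eq_getElem_of_eq rfl (by omega) _
        _ = dollar := hdollar₁
    have hqd : q[ℓ - 2]'(by omega) = dollar :=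
      (getElem_eq_getElem_of_eq hs₁q rfl _).trans hs₁last
    have hqpref₂ : q <+: s₂ := (hpqc ▸ (List.prefix_append q [c])).trans hpref₂
    have hlen₂' : ℓ ≤ T.length - i₂ := by
      have := hpref₂.length_le; omega
    have hdollar₂ : T[i₂ + (ℓ - 2)]'(by omega) = dollar := by
      calc T[i₂ + (ℓ - 2)]'(by omega) = (T.drop i₂)[ℓ - 2]'(by simp; omega) :=
            (List.getElem_drop).symm
        _ = s₂[ℓ - 2]'(by rw [hlen2]; omega) := getElem_eq_getElem_of_eq hs₂.symm rfl _
        _ = q[ℓ - 2]'(by omega) := (hqpref₂.getElem (by omega)).symm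
        _ = dollar := hqd
    have := two_le_count_of_two_getElem T dollar (i₂ + (ℓ - 2)) (T.length - 1)
      (by omega) (by omega) (by omega) hdollar₂ hdollar₁
    omega
end
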